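/- Let T be a finite nonempty set, Y any set, V a nonempty set, ℓ : Y × V → ℝ, y : T → Y, v : T → V, and let 𝒮 be a nonempty collection of subsets of T. For γ ∈ V and S ∈ 𝒮 set T_{γ,S} := {t ∈ S : v_t = γ}, and suppose for each γ in the range of v and each S ∈ 𝒮 with T_{γ,S} ≠ ∅ there exists γ*_{γ,S} ∈ V with Σ_{t∈T_{γ,S}} ℓ(y_t, γ*_{γ,S}) ≤ Σ_{t∈T_{γ,S}} ℓ(y_t, c) for all c ∈ V. Then sup_{S∈𝒮} Σ_{γ∈range(v)} |(1/|T|) Σ_{t∈T_{γ,S}} (ℓ(y_t, γ) − ℓ(y_t, γ*_{γ,S}))| = (1/|T|) · sup_{S∈𝒮} sup_{σ : V → V} Σ_{t∈S} (ℓ(y_t, v_t) − ℓ(y_t, σ(v_t))), the group-wise swap regret score. -/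
import Mathlib


/-- Recovery of the group-wise swap regret score: if on each nonempty subgroup `T_{γ,S}`
the value `γ*_{γ,S}` minimizes the cumulative loss, then the supremum over groups of the
aggregated absolute capitals equals `1/|T|` times the group-wise swap regret. -/
theorem stmt13 {T : Type*} [Fintype T] [Nonempty T] {Y V : Type*} [Nonempty V]
    [DecidableEq V]
    (ℓ : Y → V → ℝ) (y : T → Y) (v : T → V)
    (𝒮 : Set (Finset T)) (h𝒮 : 𝒮.Nonempty)
    (γstar : V → Finset T → V)
    (hγstar : ∀ γ ∈ Finset.image v Finset.univ, ∀ S ∈ 𝒮,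
      (S.filter (fun t => v t = γ)).Nonempty → ∀ c : V,
      (∑ t ∈ S.filter (fun t => v t = γ), ℓ (y t) (γstar γ S)) ≤
        ∑ t ∈ S.filter (fun t => v t = γ), ℓ (y t) c) :
    (⨆ S ∈ 𝒮, ∑ γ ∈ Finset.image v Finset.univ,
        |(Fintype.card T : ℝ)⁻¹ * ∑ t ∈ S.filter (fun t => v t = γ),
          (ℓ (y t) γ - ℓ (y t) (γstar γ S))|)
      = (Fintype.card T : ℝ)⁻¹ *
          ⨆ S ∈ 𝒮, ⨆ σ : V → V, ∑ t ∈ S, (ℓ (y t) (v t) - ℓ (y t) (σ (v t))) := by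
  classical
  set c : ℝ := (Fintype.card T : ℝ)⁻¹ with hc_def
  have hc : 0 ≤ c := by positivity
  set F : Finset V := Finset.image v Finset.univ with hF
  -- the optimal value for each group S
  set M : Finset T → ℝ := fun S =>
    ∑ γ ∈ F, ∑ t ∈ S.filter (fun t => v t = γ), (ℓ (y t) γ - ℓ (y t) (γstar γ S)) with hM
  -- rewriting a swap-sum fiberwise
  have fib : ∀ (S : Finset T) (σ : V → V),
      (∑ t ∈ S, (ℓ (y t) (v t) - ℓ (y t) (σ (v t))))
        = ∑ γ ∈ F, ∑ t ∈ S.filter (fun t => v t = γ), (ℓ (y t) γ - ℓ (y t) (σ γ)) := by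
    intro S σ
    rw [← Finset.sum_fiberwise_of_maps_to (g := v) (t := F)
      (fun t _ => Finset.mem_image_of_mem v (Finset.mem_univ t))]
    refine Finset.sum_congr rfl fun γ _ => Finset.sum_congr rfl fun t ht => ?_
    have : v t = γ := (Finset.mem_filter.mp ht).2
    rw [this]
  -- every swap-sum is at most M S
  have hub : ∀ S ∈ 𝒮, ∀ σ : V → V,
      (∑ t ∈ S, (ℓ (y t) (v t) - ℓ (y t) (σ (v t)))) ≤ M S := by
    intro S hS σ
    rw [fib S σ, hM]
    refine Finset.sum_le_sum fun γ hγ => ?_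
    rcases (S.filter (fun t => v t = γ)).eq_empty_or_nonempty with he | hne
    · simp [he]
    · rw [Finset.sum_sub_distrib, Finset.sum_sub_distrib]
      exact sub_le_sub_left (hγstar γ hγ S hS hne (σ γ)) _
  -- M S is attained at σ = fun γ => γstar γ S
  have hattain : ∀ S : Finset T,
      (∑ t ∈ S, (ℓ (y t) (v t) - ℓ (y t) ((fun γ => γstar γ S) (v t)))) = M S := by
    intro S
    rw [fib S (fun γ => γstar γ S), hM]
  -- hence the sup over σ equals M S
  have hsup : ∀ S ∈ 𝒮,
      (⨆ σ : V → V, ∑ t ∈ S, (ℓ (y t) (v t) - ℓ (y t) (σ (v t)))) = M S := by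
    intro S hS
    refine le_antisymm (ciSup_le (hub S hS)) ?_
    rw [← hattain S]
    exact le_ciSup ⟨M S, Set.forall_mem_range.mpr (hub S hS)⟩ (fun γ => γstar γ S)
  -- each group term in M S is nonnegative
  have hnonneg : ∀ S ∈ 𝒮, ∀ γ ∈ F,
      (0 : ℝ) ≤ ∑ t ∈ S.filter (fun t => v t = γ), (ℓ (y t) γ - ℓ (y t) (γstar γ S)) := by
    intro S hS γ hγ
    rcases (S.filter (fun t => v t = γ)).eq_empty_or_nonempty with he | hne
    · simp [he]
    · rw [Finset.sum_sub_distrib, sub_nonneg]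
      exact hγstar γ hγ S hS hne γ
  -- the LHS summand for S equals c * M S
  have habs : ∀ S ∈ 𝒮,
      (∑ γ ∈ F, |c * ∑ t ∈ S.filter (fun t => v t = γ),
          (ℓ (y t) γ - ℓ (y t) (γstar γ S))|) = c * M S := by
    intro S hS
    rw [hM, Finset.mul_sum]
    refine Finset.sum_congr rfl fun γ hγ => ?_
    exact abs_of_nonneg (mul_nonneg hc (hnonneg S hS γ hγ))
  calc (⨆ S ∈ 𝒮, ∑ γ ∈ F, |c * ∑ t ∈ S.filter (fun t => v t = γ),
          (ℓ (y t) γ - ℓ (y t) (γstar γ S))|)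
      = ⨆ S, ⨆ _ : S ∈ 𝒮, c * M S := by
        refine iSup_congr fun S => iSup_congr fun hS => habs S hS
    _ = ⨆ S, ⨆ _ : S ∈ 𝒮, c *
          ⨆ σ : V → V, ∑ t ∈ S, (ℓ (y t) (v t) - ℓ (y t) (σ (v t))) := by
        refine iSup_congr fun S => iSup_congr fun hS => by rw [hsup S hS]
    _ = c * ⨆ S ∈ 𝒮, ⨆ σ : V → V, ∑ t ∈ S, (ℓ (y t) (v t) - ℓ (y t) (σ (v t))) := by
        rw [Real.mul_iSup_of_nonneg hc]
        exact iSup_congr fun S => (Real.mul_iSup_of_nonneg hc _).symm
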